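/- Let B be the unweighted backward shift on l^∞(ℕ) and let λ ∈ ℂ with |λ| > 2. Then J_{I+λB}^mix(0) = l^∞(ℕ), i.e. for every y ∈ l^∞(ℕ) there exists a sequence (w^{(n)}) in l^∞(ℕ) with w^{(n)} → 0 and (I+λB)^n w^{(n)} → y. -/

import Mathlib

open Filter Topology
open scoped ENNReal

/-- The unweighted backward shift on `l^∞(ℕ)`, the space of bounded sequences of
complex numbers with the supremum norm. -/
noncomputable def backwardShift : lp (fun _ : ℕ => ℂ) ∞ →L[ℂ] lp (fun _ : ℕ => ℂ) ∞ :=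
  LinearMap.mkContinuous
    { toFun := fun x => ⟨fun n => x (n + 1), memℓp_infty ⟨‖x‖, by
        rintro r ⟨n, rfl⟩
        exact lp.norm_apply_le_norm ENNReal.top_ne_zero x (n + 1)⟩⟩
      map_add' := fun x y => by ext n; exact congrFun rfl n
      map_smul' := fun c x => by ext n; rfl }
    1
    (fun x => by
      rw [one_mul]
      apply lp.norm_le_of_forall_le (norm_nonneg x)
      intro n
      exact lp.norm_apply_le_norm ENNReal.top_ne_zero x (n + 1))

/-- The extended mixing limit set `J_T^mix(x)`: all `y` for which there exists a
sequence `(x_n)` with `x_n → x` and `T^n x_n → y`. -/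
noncomputable def Jmix {X : Type*} [SeminormedAddCommGroup X] [NormedSpace ℂ X]
    (T : X →L[ℂ] X) (x : X) : Set X :=
  {y | ∃ u : ℕ → X, Tendsto u atTop (𝓝 x) ∧ Tendsto (fun n => (T ^ n) (u n)) atTop (𝓝 y)}

/-- The raw right-inverse formula: `(R x)_n = ∑_{j<n} (-1)^j λ^{-(j+1)} x_{n-1-j}`. -/
noncomputable def Rfun (lam : ℂ) (x : ℕ → ℂ) : ℕ → ℂ :=
  fun n => ∑ j ∈ Finset.range n, (-1 : ℂ) ^ j * lam⁻¹ ^ (j + 1) * x (n - 1 - j)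

lemma geom_tail_le {a : ℝ} (ha : 1 < a) (n : ℕ) :
    ∑ j ∈ Finset.range n, (a⁻¹) ^ (j + 1) ≤ (a - 1)⁻¹ := by
  have ha0 : 0 < a := lt_trans one_pos ha
  have hr0 : 0 ≤ a⁻¹ := by positivity
  have hr1 : a⁻¹ < 1 := by
    rw [inv_lt_one_iff₀]; right; exact ha
  have h1 : ∑ j ∈ Finset.range n, (a⁻¹) ^ (j + 1)
      = a⁻¹ * ∑ j ∈ Finset.range n, (a⁻¹) ^ j := by
    rw [Finset.mul_sum]
    exact Finset.sum_congr rfl fun j _ => by rw [pow_succ']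
  have h2 : ∑ j ∈ Finset.range n, (a⁻¹) ^ j ≤ (1 - a⁻¹)⁻¹ := by
    refine Summable.sum_le_tsum (Finset.range n) (fun i _ => by positivity) ?_ |>.trans_eq
      (tsum_geometric_of_lt_one hr0 hr1)
    exact summable_geometric_of_lt_one hr0 hr1
  have h3 : a⁻¹ * (1 - a⁻¹)⁻¹ = (a - 1)⁻¹ := by
    rw [← mul_inv]
    congr 1
    field_simp
  rw [h1, ← h3]
  exact mul_le_mul_of_nonneg_left h2 hr0

lemma Rfun_norm_le (lam : ℂ) (hlam : 2 < ‖lam‖) (x : lp (fun _ : ℕ => ℂ) ∞) (n : ℕ) :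
    ‖Rfun lam (⇑x) n‖ ≤ (‖lam‖ - 1)⁻¹ * ‖x‖ := by
  have ha : 1 < ‖lam‖ := lt_trans one_lt_two hlam
  calc ‖Rfun lam (⇑x) n‖
      ≤ ∑ j ∈ Finset.range n, ‖(-1 : ℂ) ^ j * lam⁻¹ ^ (j + 1) * x (n - 1 - j)‖ :=
        norm_sum_le _ _
    _ ≤ ∑ j ∈ Finset.range n, (‖lam‖⁻¹) ^ (j + 1) * ‖x‖ := by
        refine Finset.sum_le_sum fun j _ => ?_
        rw [norm_mul, norm_mul, norm_pow, norm_pow, norm_neg, norm_one, one_pow, one_mul,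
          norm_inv]
        exact mul_le_mul_of_nonneg_left
          (lp.norm_apply_le_norm ENNReal.top_ne_zero x (n - 1 - j)) (by positivity)
    _ = (∑ j ∈ Finset.range n, (‖lam‖⁻¹) ^ (j + 1)) * ‖x‖ := by
        rw [Finset.sum_mul]
    _ ≤ (‖lam‖ - 1)⁻¹ * ‖x‖ :=
        mul_le_mul_of_nonneg_right (geom_tail_le ha n) (norm_nonneg x)

/-- The right inverse as a map on `l^∞`. -/
noncomputable def Rop (lam : ℂ) (hlam : 2 < ‖lam‖) (x : lp (fun _ : ℕ => ℂ) ∞) :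
    lp (fun _ : ℕ => ℂ) ∞ :=
  ⟨Rfun lam (⇑x), memℓp_infty ⟨(‖lam‖ - 1)⁻¹ * ‖x‖, by
    rintro r ⟨n, rfl⟩
    exact Rfun_norm_le lam hlam x n⟩⟩

lemma Rop_coe (lam : ℂ) (hlam : 2 < ‖lam‖) (x : lp (fun _ : ℕ => ℂ) ∞) (n : ℕ) :
    (Rop lam hlam x : ℕ → ℂ) n = Rfun lam (⇑x) n := rfl

lemma Rop_norm_le (lam : ℂ) (hlam : 2 < ‖lam‖) (x : lp (fun _ : ℕ => ℂ) ∞) :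
    ‖Rop lam hlam x‖ ≤ (‖lam‖ - 1)⁻¹ * ‖x‖ := by
  apply lp.norm_le_of_forall_le (mul_nonneg (inv_nonneg.mpr (by linarith)) (norm_nonneg x))
  intro n
  exact Rfun_norm_le lam hlam x n

lemma T_apply (lam : ℂ) (x : lp (fun _ : ℕ => ℂ) ∞) (n : ℕ) :
    ((1 + lam • backwardShift) x : ℕ → ℂ) n = x n + lam * x (n + 1) := by
  rw [ContinuousLinearMap.add_apply, ContinuousLinearMap.one_apply,
    ContinuousLinearMap.smul_apply, lp.coeFn_add, lp.coeFn_smul]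
  rfl

lemma T_Rop (lam : ℂ) (hlam : 2 < ‖lam‖) (x : lp (fun _ : ℕ => ℂ) ∞) :
    (1 + lam • backwardShift) (Rop lam hlam x) = x := by
  have hlam0 : lam ≠ 0 := by
    intro h; rw [h, norm_zero] at hlam; linarith
  ext n
  rw [T_apply, Rop_coe, Rop_coe]
  have h1 : lam * Rfun lam (⇑x) (n + 1)
      = ∑ j ∈ Finset.range (n + 1), (-1 : ℂ) ^ j * lam⁻¹ ^ j * x (n - j) := by
    rw [Rfun, Finset.mul_sum]
    refine Finset.sum_congr rfl fun j _ => ?_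
    have hn : n + 1 - 1 - j = n - j := by omega
    rw [hn, pow_succ]
    field_simp
  rw [h1, Finset.sum_range_succ']
  have h2 : ∑ i ∈ Finset.range n, (-1 : ℂ) ^ (i + 1) * lam⁻¹ ^ (i + 1) * x (n - (i + 1))
      = - Rfun lam (⇑x) n := by
    rw [Rfun, ← Finset.sum_neg_distrib]
    refine Finset.sum_congr rfl fun i _ => ?_
    have hn : n - (i + 1) = n - 1 - i := by omega
    rw [hn, pow_succ]
    ring
  rw [h2]
  simp

/-- If `|λ| > 2`, then `J_{I+λB}^mix(0) = l^∞(ℕ)`: for every `y` there is a sequence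
`(w_n)` with `w_n → 0` and `(I+λB)^n w_n → y`. -/
theorem stmt3 (lam : ℂ) (hlam : 2 < ‖lam‖) :
    Jmix (1 + lam • backwardShift) (0 : lp (fun _ : ℕ => ℂ) ∞) = Set.univ := by
  rw [Set.eq_univ_iff_forall]
  intro y
  set T := (1 + lam • backwardShift : lp (fun _ : ℕ => ℂ) ∞ →L[ℂ] lp (fun _ : ℕ => ℂ) ∞)
  set R := Rop lam hlam
  set r : ℝ := (‖lam‖ - 1)⁻¹ with hr
  have hr0 : 0 ≤ r := by rw [hr]; exact inv_nonneg.mpr (by linarith)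
  have hr1 : r < 1 := by
    rw [hr, inv_lt_one_iff₀]; right; linarith
  refine ⟨fun n => R^[n] y, ?_, ?_⟩
  · -- R^[n] y → 0
    have hbound : ∀ n, ‖R^[n] y‖ ≤ r ^ n * ‖y‖ := by
      intro n
      induction n with
      | zero => rw [Function.iterate_zero_apply, pow_zero, one_mul]
      | succ n ih =>
        rw [Function.iterate_succ_apply']
        calc ‖R (R^[n] y)‖ ≤ r * ‖R^[n] y‖ := Rop_norm_le lam hlam _
          _ ≤ r * (r ^ n * ‖y‖) := mul_le_mul_of_nonneg_left ih hr0
          _ = r ^ (n + 1) * ‖y‖ := by ring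
    have hlim : Tendsto (fun n => r ^ n * ‖y‖) atTop (𝓝 0) := by
      have h := (tendsto_pow_atTop_nhds_zero_of_lt_one hr0 hr1).mul_const ‖y‖
      rwa [zero_mul] at h
    exact squeeze_zero_norm hbound hlim
  · -- T^n (R^[n] y) = y for all n
    have hinv : ∀ n, (T ^ n) (R^[n] y) = y := by
      intro n
      induction n with
      | zero =>
        rw [Function.iterate_zero_apply, pow_zero]
        exact ContinuousLinearMap.one_apply y
      | succ n ih =>
        rw [Function.iterate_succ_apply', pow_succ, ContinuousLinearMap.mul_apply,
          T_Rop lam hlam]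
        exact ih
    exact Tendsto.congr (fun n => (hinv n).symm) tendsto_const_nhds
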